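/- Let a, b, s, t be positive integers with a < s ≤ t ≤ b. Then every K_{s,t}-free graph G on n vertices satisfies N(K_{a,b}, G) ≤ C(s-1,a)·C(n,b), where C(m,k) denotes the binomial coefficient; in particular, in such a graph any set of b vertices has at most s-1 common neighbors. -/

import Mathlib

open SimpleGraph

/-- `F` is contained in `G` as a subgraph, i.e. there is an injective graph
homomorphism from `F` to `G`. -/
def ContainsCopy {α β : Type*} (F : SimpleGraph α) (G : SimpleGraph β) : Prop :=
  ∃ f : F →g G, Function.Injective f

/-- `N(H,G)`: the number of subgraphs of `G` isomorphic to `H`. -/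
noncomputable def copyCountSub {α β : Type*} (H : SimpleGraph α) (G : SimpleGraph β) : ℕ :=
  Nat.card {G' : G.Subgraph // Nonempty (H ≃g G'.coe)}

/-- `ex(n,H,F)`: the maximum number of copies of `H` in an `F`-free graph on `n` vertices. -/
noncomputable def exGen (n : ℕ) {α β : Type*} (H : SimpleGraph α) (F : SimpleGraph β) : ℕ :=
  sSup {m | ∃ G : SimpleGraph (Fin n), ¬ ContainsCopy F G ∧ m = copyCountSub H G}

/-- The complete bipartite graph `K_{a,b}`. -/
abbrev Kbip (a b : ℕ) : SimpleGraph (Fin a ⊕ Fin b) := completeBipartiteGraph (Fin a) (Fin b)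

/-- `K̄_{a,b}`: obtained from `K_{a,b}` by adding all edges inside the part of size `a`. -/
def KbipBar (a b : ℕ) : SimpleGraph (Fin a ⊕ Fin b) :=
  SimpleGraph.fromRel (fun u _ => u.isLeft)

/-- `k` vertex-disjoint copies of `G`. -/
def disjCopies (k : ℕ) {α : Type*} (G : SimpleGraph α) : SimpleGraph (Fin k × α) :=
  SimpleGraph.fromRel (fun u v => u.1 = v.1 ∧ G.Adj u.2 v.2)

/-- The vertex-disjoint union of `G` and `H`. -/
def disjSum {α β : Type*} (G : SimpleGraph α) (H : SimpleGraph β) : SimpleGraph (α ⊕ β) :=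
  SimpleGraph.fromRel (fun u v =>
    (∃ x y, u = Sum.inl x ∧ v = Sum.inl y ∧ G.Adj x y) ∨
    (∃ x y, u = Sum.inr x ∧ v = Sum.inr y ∧ H.Adj x y))

/-- Placing a graph `G0` on the `Fin b`-part of the vertex set `Fin a ⊕ Fin b`. -/
def liftRight (a : ℕ) {b : ℕ} (G0 : SimpleGraph (Fin b)) : SimpleGraph (Fin a ⊕ Fin b) :=
  SimpleGraph.fromRel (fun u v => ∃ x y, u = Sum.inr x ∧ v = Sum.inr y ∧ G0.Adj x y)

/-- if `a < s ≤ t ≤ b`, then every `K_{s,t}`-free graph `G` on `n` vertices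
satisfies `N(K_{a,b}, G) ≤ C(s-1,a)·C(n,b)`; in particular any set of `b` vertices has at
most `s-1` common neighbors. -/
theorem stmt19 (a b s t : ℕ) (ha : 0 < a) (hb : 0 < b) (hs : 0 < s) (ht : 0 < t)
    (has : a < s) (hst : s ≤ t) (htb : t ≤ b)
    {V : Type*} [Fintype V] (n : ℕ) (hcard : Fintype.card V = n)
    (G : SimpleGraph V) (hfree : ¬ ContainsCopy (Kbip s t) G) :
    copyCountSub (Kbip a b) G ≤ Nat.choose (s - 1) a * Nat.choose n b ∧
    ∀ S : Finset V, S.card = b →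
      ({v : V | ∀ u ∈ S, G.Adj v u} : Set V).ncard ≤ s - 1 := by
  classical
  set NB : Finset V → Finset V :=
    fun B => Finset.univ.filter (fun v => ∀ u ∈ B, G.Adj v u) with hNB
  have hNBmem : ∀ (B : Finset V) (v : V), v ∈ NB B ↔ ∀ u ∈ B, G.Adj v u := by
    intro B v; simp [hNB]
  -- key bound: any B with at least b vertices has at most s-1 common neighbors
  have L : ∀ B : Finset V, b ≤ B.card → (NB B).card ≤ s - 1 := by
    intro B hB
    by_contra h
    push_neg at h
    have hs' : s ≤ (NB B).card := by omega
    obtain ⟨f⟩ : Nonempty (Fin s ↪ {x // x ∈ NB B}) := by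
      apply Function.Embedding.nonempty_of_card_le
      simpa using hs'
    obtain ⟨g⟩ : Nonempty (Fin t ↪ {x // x ∈ B}) := by
      apply Function.Embedding.nonempty_of_card_le
      simp only [Fintype.card_fin, Fintype.card_coe]
      omega
    have hadj : ∀ (i : Fin s) (j : Fin t), G.Adj (f i : V) (g j : V) := by
      intro i j
      exact ((hNBmem B (f i)).1 (f i).2) (g j) (g j).2
    apply hfree
    refine ⟨⟨Sum.elim (fun i => ((f i : V))) (fun j => ((g j : V))), ?_⟩, ?_⟩
    · rintro (i | j) (i' | j') huv
      · simp only [completeBipartiteGraph_adj] at huv; simp at huv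
      · exact hadj i j'
      · exact (hadj i' j).symm
      · simp only [completeBipartiteGraph_adj] at huv; simp at huv
    · rintro (i | j) (i' | j') hxy
      · exact congrArg Sum.inl (f.injective (Subtype.ext hxy))
      · have h' : ((f i : V)) = ((g j' : V)) := hxy
        exact absurd (h' ▸ hadj i j') (G.irrefl)
      · have h' : ((g j : V)) = ((f i' : V)) := hxy
        exact absurd (h'.symm ▸ (hadj i' j)) (G.irrefl)
      · exact congrArg Sum.inr (g.injective (Subtype.ext hxy))
  constructor
  · -- counting copies of K_{a,b}
    set P : Finset V × Finset V → Prop :=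
      fun p => p.1.card = a ∧ p.2.card = b ∧ p.1 ⊆ NB p.2 with hP
    -- characterize each copy by its bipartition
    have key : ∀ (G' : G.Subgraph), (Kbip a b ≃g G'.coe) →
        ∃ p : Finset V × Finset V, P p ∧
          (∀ x y, G'.Adj x y ↔ ((x ∈ p.1 ∧ y ∈ p.2) ∨ (x ∈ p.2 ∧ y ∈ p.1))) ∧
          G'.verts = (↑(p.1 ∪ p.2) : Set V) := by
      intro G' e
      have hinj : Function.Injective (fun v : Fin a ⊕ Fin b => ((e v : G'.verts) : V)) :=
        Subtype.val_injective.comp e.toEquiv.injective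
      set A : Finset V := Finset.univ.image (fun i : Fin a => ((e (Sum.inl i) : G'.verts) : V)) with hA
      set B : Finset V := Finset.univ.image (fun j : Fin b => ((e (Sum.inr j) : G'.verts) : V)) with hB
      have hmemA : ∀ x, x ∈ A ↔ ∃ i, ((e (Sum.inl i) : G'.verts) : V) = x := by
        intro x; simp [hA]
      have hmemB : ∀ x, x ∈ B ↔ ∃ j, ((e (Sum.inr j) : G'.verts) : V) = x := by
        intro x; simp [hB]
      have hAdj : ∀ x y, G'.Adj x y ↔ ((x ∈ A ∧ y ∈ B) ∨ (x ∈ B ∧ y ∈ A)) := by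
        intro x y
        constructor
        · intro hxy
          have hx := hxy.fst_mem
          have hy := hxy.snd_mem
          have hcoe : G'.coe.Adj ⟨x, hx⟩ ⟨y, hy⟩ := hxy
          have hK : (Kbip a b).Adj (e.symm ⟨x, hx⟩) (e.symm ⟨y, hy⟩) :=
            e.symm.map_adj_iff.mpr (by simpa using hcoe)
          have hxe : ((e (e.symm ⟨x, hx⟩) : G'.verts) : V) = x := by
            rw [e.apply_symm_apply]
          have hye : ((e (e.symm ⟨y, hy⟩) : G'.verts) : V) = y := by
            rw [e.apply_symm_apply]
          rcases hu : e.symm ⟨x, hx⟩ with i | j <;> rcases hv : e.symm ⟨y, hy⟩ with i' | j' <;>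
            [skip; skip; skip; skip] <;> rw [hu] at hK hxe <;> rw [hv] at hK hye
          · simp at hK
          · exact Or.inl ⟨(hmemA x).2 ⟨i, hxe⟩, (hmemB y).2 ⟨j', hye⟩⟩
          · exact Or.inr ⟨(hmemB x).2 ⟨j, hxe⟩, (hmemA y).2 ⟨i', hye⟩⟩
          · simp at hK
        · rintro (⟨hx, hy⟩ | ⟨hx, hy⟩)
          · obtain ⟨i, hi⟩ := (hmemA x).1 hx
            obtain ⟨j, hj⟩ := (hmemB y).1 hy
            have : G'.coe.Adj (e (Sum.inl i)) (e (Sum.inr j)) :=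
              e.map_adj_iff.mpr (by simp)
            rw [← hi, ← hj]
            exact this
          · obtain ⟨j, hj⟩ := (hmemB x).1 hx
            obtain ⟨i, hi⟩ := (hmemA y).1 hy
            have : G'.coe.Adj (e (Sum.inr j)) (e (Sum.inl i)) :=
              e.map_adj_iff.mpr (by simp)
            rw [← hi, ← hj]
            exact this
      refine ⟨(A, B), ⟨?_, ?_, ?_⟩, hAdj, ?_⟩
      · rw [hA, Finset.card_image_of_injective _ (fun i i' h => ?_), Finset.card_univ,
          Fintype.card_fin]
        exact Sum.inl_injective (hinj h)
      · rw [hB, Finset.card_image_of_injective _ (fun j j' h => ?_), Finset.card_univ,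
          Fintype.card_fin]
        exact Sum.inr_injective (hinj h)
      · intro x hx
        rw [hNBmem]
        intro u hu
        exact ((hAdj x u).2 (Or.inl ⟨hx, hu⟩)).adj_sub
      · ext x
        simp only [Finset.coe_union, Set.mem_union, Finset.mem_coe]
        constructor
        · intro hx
          have hxe : ((e (e.symm ⟨x, hx⟩) : G'.verts) : V) = x := by
            rw [e.apply_symm_apply]
          rcases hu : e.symm ⟨x, hx⟩ with i | j <;> rw [hu] at hxe
          · exact Or.inl ((hmemA x).2 ⟨i, hxe⟩)
          · exact Or.inr ((hmemB x).2 ⟨j, hxe⟩)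
        · rintro (hx | hx)
          · obtain ⟨i, hi⟩ := (hmemA x).1 hx
            exact hi ▸ (e (Sum.inl i)).2
          · obtain ⟨j, hj⟩ := (hmemB x).1 hx
            exact hj ▸ (e (Sum.inr j)).2
    -- injection from copies into pairs
    have hle : copyCountSub (Kbip a b) G ≤ Nat.card {p : Finset V × Finset V // P p} := by
      rw [copyCountSub]
      have : ∀ x : {G' : G.Subgraph // Nonempty (Kbip a b ≃g G'.coe)},
          ∃ p : Finset V × Finset V, P p ∧
            (∀ u v, x.1.Adj u v ↔ ((u ∈ p.1 ∧ v ∈ p.2) ∨ (u ∈ p.2 ∧ v ∈ p.1))) ∧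
            x.1.verts = (↑(p.1 ∪ p.2) : Set V) := fun x => key x.1 (Classical.choice x.2)
      choose Φ hΦ1 hΦ2 hΦ3 using this
      apply Nat.card_le_card_of_injective (fun x => (⟨Φ x, hΦ1 x⟩ : {p // P p}))
      intro x y hxy
      simp only [Subtype.mk.injEq] at hxy
      apply Subtype.ext
      apply SimpleGraph.Subgraph.ext
      · rw [hΦ3 x, hΦ3 y, hxy]
      · ext u v
        rw [hΦ2 x, hΦ2 y, hxy]
    refine hle.trans ?_
    rw [Nat.card_eq_fintype_card, Fintype.card_subtype]
    have hsub : Finset.univ.filter P ⊆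
        (Finset.univ.powersetCard b).biUnion
          (fun B => ((NB B).powersetCard a).image (fun A => (A, B))) := by
      intro p hp
      rw [Finset.mem_filter] at hp
      obtain ⟨-, h1, h2, h3⟩ := hp
      rw [Finset.mem_biUnion]
      exact ⟨p.2, Finset.mem_powersetCard.2 ⟨Finset.subset_univ _, h2⟩,
        Finset.mem_image.2 ⟨p.1, Finset.mem_powersetCard.2 ⟨h3, h1⟩, rfl⟩⟩
    calc (Finset.univ.filter P).card
        ≤ _ := Finset.card_le_card hsub
      _ ≤ ∑ B ∈ Finset.univ.powersetCard b,
            (((NB B).powersetCard a).image (fun A => (A, B))).card :=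
          Finset.card_biUnion_le
      _ ≤ ∑ B ∈ Finset.univ.powersetCard b, Nat.choose (s - 1) a := by
          apply Finset.sum_le_sum
          intro B hB
          refine (Finset.card_image_le).trans ?_
          rw [Finset.card_powersetCard]
          exact Nat.choose_le_choose a
            (L B (by rw [(Finset.mem_powersetCard.1 hB).2]))
      _ = Nat.choose (s - 1) a * Nat.choose n b := by
          rw [Finset.sum_const, Finset.card_powersetCard, Finset.card_univ, hcard,
            smul_eq_mul, mul_comm]
  · intro S hS
    have : ({v : V | ∀ u ∈ S, G.Adj v u} : Set V) = ↑(NB S) := by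
      ext v; simp [hNB]
    rw [this, Set.ncard_coe_finset]
    exact L S (le_of_eq hS.symm)
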